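/- arXiv:2412.04928 — 2 statements merged into one kernel-verified Lean document; each statement's English description precedes it below -/
import Mathlib

section
/- The set V = ∪_{i≥0} V_i, where V_0 = −S(L) and V_{i+1} = ∪_{v ∈ V_i} π(Ψ(v)), is a well-ordered subset of ℚ. -/
open Polynomial Finset

noncomputable def PL {K : Type*} [Field K] (ℓ n : ℕ) (a : ℕ → Polynomial K) : Finset (ℚ × ℚ) :=
  (Finset.range (n + 1)).biUnion fun i =>
    (a i).support.image fun j : ℕ => ((ℓ : ℚ) ^ i, (j : ℚ))

noncomputable def PsiSet {K : Type*} [Field K] (ℓ n : ℕ) (a : ℕ → Polynomial K) (v : ℚ) :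
    Finset ℚ :=
  (PL ℓ n a).image fun p => v * p.1 + p.2

noncomputable def psi {K : Type*} [Field K] (ℓ n : ℕ) (a : ℕ → Polynomial K) (v : ℚ) : ℚ :=
  WithTop.untopD 0 ((PsiSet ℓ n a v).min)

noncomputable def piF {K : Type*} [Field K] (ℓ n : ℕ) (a : ℕ → Polynomial K) (q : ℚ) : ℚ :=
  WithBot.unbotD 0 (((PL ℓ n a).image fun p => (q - p.2) / p.1).max)

def slopeSet {K : Type*} [Field K] (ℓ n : ℕ) (a : ℕ → Polynomial K) : Set ℚ :=
  {μ | ∃ b : ℚ,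
    (∃ p ∈ PL ℓ n a, ∃ q ∈ PL ℓ n a, p ≠ q ∧ p.2 - μ * p.1 = b ∧ q.2 - μ * q.1 = b) ∧
    ∀ p ∈ PL ℓ n a, b ≤ p.2 - μ * p.1}

noncomputable def scaleEmb (ℓ : ℕ) (hℓ : 2 ≤ ℓ) (i : ℕ) : ℚ ↪o ℚ :=
  (OrderIso.mulLeft₀ ((ℓ : ℚ) ^ i)
    (pow_pos (by exact_mod_cast Nat.lt_of_lt_of_le Nat.zero_lt_two hℓ) i)).toOrderEmbedding

noncomputable def mahlerOp {K : Type*} [Field K] (ℓ : ℕ) (hℓ : 2 ≤ ℓ) (n : ℕ)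
    (a : ℕ → Polynomial K) (f : HahnSeries ℚ K) : HahnSeries ℚ K :=
  ∑ i ∈ Finset.range (n + 1),
    (HahnSeries.ofPowerSeries ℚ K (a i : PowerSeries K)) *
      HahnSeries.embDomain (scaleEmb ℓ hℓ i) f

noncomputable def VSeq {K : Type*} [Field K] (ℓ n : ℕ) (a : ℕ → Polynomial K) : ℕ → Set ℚ
  | 0 => Neg.neg '' slopeSet ℓ n a
  | i + 1 => ⋃ v ∈ VSeq ℓ n a i, ((PsiSet ℓ n a v).image (piF ℓ n a) : Set ℚ)

noncomputable def VSet {K : Type*} [Field K] (ℓ n : ℕ) (a : ℕ → Polynomial K) : Set ℚ :=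
  ⋃ i, VSeq ℓ n a i

section Aux
variable {K : Type*} [Field K] {ℓ n : ℕ} {a : ℕ → Polynomial K}

lemma PL_fst_pos (hℓ : 2 ≤ ℓ) {p : ℚ × ℚ} (hp : p ∈ PL ℓ n a) : 0 < p.1 := by
  simp only [PL, Finset.mem_biUnion, Finset.mem_image] at hp
  obtain ⟨i, -, j, -, rfl⟩ := hp
  have h2 : (0:ℚ) < (ℓ:ℚ) := by exact_mod_cast Nat.lt_of_lt_of_le Nat.zero_lt_two hℓ
  exact pow_pos h2 i

lemma PL_nonempty (h0 : a 0 ≠ 0) : (PL ℓ n a).Nonempty := by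
  obtain ⟨j, hj⟩ := Polynomial.support_nonempty.mpr h0
  refine ⟨((ℓ:ℚ) ^ 0, (j:ℚ)), ?_⟩
  simp only [PL, Finset.mem_biUnion, Finset.mem_image]
  exact ⟨0, Finset.mem_range.mpr (Nat.succ_pos n), j, hj, rfl⟩

lemma piF_spec (h0 : a 0 ≠ 0) (q : ℚ) :
    (∃ p' ∈ PL ℓ n a, piF ℓ n a q = (q - p'.2) / p'.1) ∧
    ∀ p ∈ PL ℓ n a, (q - p.2) / p.1 ≤ piF ℓ n a q := by
  classical
  set s : Finset ℚ := (PL ℓ n a).image (fun p => (q - p.2) / p.1) with hs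
  have hne : s.Nonempty := (PL_nonempty h0).image _
  have hmax : piF ℓ n a q = s.max' hne := by
    rw [piF, ← hs, ← Finset.coe_max' hne]
    rfl
  constructor
  · have hmem : s.max' hne ∈ s := Finset.max'_mem s hne
    have hmem' : s.max' hne ∈ (PL ℓ n a).image (fun p => (q - p.2) / p.1) := hmem
    rw [Finset.mem_image] at hmem'
    obtain ⟨p', hp', he⟩ := hmem'
    exact ⟨p', hp', by rw [hmax, ← he]⟩
  · intro p hp
    rw [hmax]
    exact Finset.le_max' s _ (show _ ∈ (PL ℓ n a).image (fun p => (q - p.2) / p.1) from Finset.mem_image_of_mem _ hp)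

lemma step_succ (hℓ : 2 ≤ ℓ) (h0 : a 0 ≠ 0) {i : ℕ} {w : ℚ} (hw : w ∈ VSeq ℓ n a (i + 1)) :
    ∃ v ∈ VSeq ℓ n a i, ∃ p ∈ PL ℓ n a, ∃ p' ∈ PL ℓ n a,
      w = (v * p.1 + p.2 - p'.2) / p'.1 ∧ v ≤ w := by
  simp only [VSeq, Set.mem_iUnion, Finset.coe_image, Set.mem_image, Finset.mem_coe] at hw
  obtain ⟨v, hv, q, hq, rfl⟩ := hw
  rw [PsiSet, Finset.mem_image] at hq
  obtain ⟨p, hp, rfl⟩ := hq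
  obtain ⟨⟨p', hp', hEq⟩, hub⟩ := piF_spec (ℓ := ℓ) (n := n) h0 (v * p.1 + p.2)
  have hp1 : (0:ℚ) < p.1 := PL_fst_pos hℓ hp
  refine ⟨v, hv, p, hp, p', hp', hEq, ?_⟩
  have h := hub p hp
  have he : (v * p.1 + p.2 - p.2) / p.1 = v := by field_simp; ring
  rwa [he] at h

lemma exists_root (hℓ : 2 ≤ ℓ) (h0 : a 0 ≠ 0) :
    ∀ i, ∀ w ∈ VSeq ℓ n a i, ∃ v₀ ∈ VSeq ℓ n a 0, v₀ ≤ w := by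
  intro i
  induction i with
  | zero => exact fun w hw => ⟨w, hw, le_refl w⟩
  | succ i ih =>
    intro w hw
    obtain ⟨v, hv, _, _, _, _, _, hle⟩ := step_succ hℓ h0 hw
    obtain ⟨v₀, h₀, hle'⟩ := ih v hv
    exact ⟨v₀, h₀, hle'.trans hle⟩

lemma crossing (hℓ : 2 ≤ ℓ) (h0 : a 0 ≠ 0) :
    ∀ i, ∀ w ∈ VSeq ℓ n a i, ∀ x : ℝ, x < (w : ℝ) →
    (∃ v₀ ∈ VSeq ℓ n a 0, x < (v₀ : ℝ) ∧ v₀ ≤ w) ∨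
    (∃ v ∈ VSet ℓ n a, ∃ p ∈ PL ℓ n a, ∃ p' ∈ PL ℓ n a,
      (v : ℝ) ≤ x ∧ x < (((v * p.1 + p.2 - p'.2) / p'.1 : ℚ) : ℝ) ∧
      (v * p.1 + p.2 - p'.2) / p'.1 ≤ w) := by
  intro i
  induction i with
  | zero => exact fun w hw x hx => Or.inl ⟨w, hw, hx, le_refl w⟩
  | succ i ih =>
    intro w hw x hx
    obtain ⟨v, hv, p, hp, p', hp', hEq, hle⟩ := step_succ hℓ h0 hw
    by_cases hvx : (v : ℝ) ≤ x
    · refine Or.inr ⟨v, Set.mem_iUnion.mpr ⟨i, hv⟩, p, hp, p', hp', hvx, ?_, ?_⟩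
      · rw [← hEq]; exact hx
      · rw [← hEq]
    · push_neg at hvx
      rcases ih v hv x hvx with ⟨v₀, h₀, h1, h2⟩ | ⟨v', hv', p2, hp2, p2', hp2', h1, h2, h3⟩
      · exact Or.inl ⟨v₀, h₀, h1, h2.trans hle⟩
      · exact Or.inr ⟨v', hv', p2, hp2, p2', hp2', h1, h2, h3.trans hle⟩

lemma slopeSet_finite : (slopeSet ℓ n a).Finite := by
  apply Set.Finite.subset
    (((PL ℓ n a) ×ˢ (PL ℓ n a)).image
      (fun pq : (ℚ × ℚ) × (ℚ × ℚ) => (pq.1.2 - pq.2.2) / (pq.1.1 - pq.2.1))).finite_toSet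
  rintro μ ⟨b, ⟨p, hp, q, hq, hne, h1, h2⟩, -⟩
  have hne1 : p.1 ≠ q.1 := by
    intro h
    apply hne
    have : p.2 = q.2 := by
      have := h1.trans h2.symm
      rw [h] at this
      linarith
    exact Prod.ext h this
  have hμ : μ = (p.2 - q.2) / (p.1 - q.1) := by
    rw [eq_div_iff (sub_ne_zero.mpr hne1)]
    linear_combination h2 - h1
  simp only [Finset.coe_image, Set.mem_image, Finset.mem_coe, Finset.mem_product]
  exact ⟨(p, q), ⟨hp, hq⟩, hμ.symm⟩

lemma VSeq0_finite : (VSeq ℓ n a 0).Finite := by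
  have : VSeq ℓ n a 0 = Neg.neg '' slopeSet ℓ n a := rfl
  rw [this]
  exact slopeSet_finite.image _

end Aux

theorem stmt10 {K : Type*} [Field K] (ℓ n : ℕ) (hℓ : 2 ≤ ℓ) (a : ℕ → Polynomial K)
    (h0 : a 0 ≠ 0) (hn : a n ≠ 0) :
    (VSet ℓ n a).IsWF := by
  rw [Set.isWF_iff_no_descending_seq]
  intro f hf hmem
  have hfin0 : (VSeq ℓ n a 0).Finite := VSeq0_finite
  obtain ⟨m, hm⟩ : ∃ m : ℝ, ∀ v₀ ∈ VSeq ℓ n a 0, m ≤ (v₀ : ℝ) := by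
    obtain ⟨m, hm⟩ := (hfin0.image (fun v : ℚ => (v : ℝ))).bddBelow
    exact ⟨m, fun v₀ h => hm (Set.mem_image_of_mem _ h)⟩
  have hlb : ∀ w ∈ VSet ℓ n a, m ≤ (w : ℝ) := by
    intro w hw
    obtain ⟨i, hi⟩ := Set.mem_iUnion.mp hw
    obtain ⟨v₀, h₀, hle⟩ := exists_root hℓ h0 i w hi
    exact (hm v₀ h₀).trans (by exact_mod_cast hle)
  set A : Set ℝ := {x | ∀ ε : ℝ, 0 < ε → ∃ w ∈ VSet ℓ n a, x < (w : ℝ) ∧ (w : ℝ) < x + ε}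
    with hA
  have hmemV : ∀ k : ℕ, f k ∈ VSet ℓ n a := fun k => hmem k
  have hAne : A.Nonempty := by
    set Sf : Set ℝ := Set.range (fun k : ℕ => ((f k : ℚ) : ℝ)) with hSf
    have hSfne : Sf.Nonempty := ⟨_, ⟨0, rfl⟩⟩
    have hSfb : BddBelow Sf := ⟨m, by rintro y ⟨k, rfl⟩; exact hlb _ (hmemV k)⟩
    refine ⟨sInf Sf, ?_⟩
    intro ε hε
    obtain ⟨y, ⟨k, rfl⟩, hy⟩ := Real.lt_sInf_add_pos hSfne hε
    refine ⟨f k, hmemV k, ?_, hy⟩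
    have h1 : sInf Sf ≤ ((f (k+1) : ℚ) : ℝ) := csInf_le hSfb ⟨k+1, rfl⟩
    have h2 : (f (k+1) : ℚ) < f k := hf (lt_add_one k)
    calc sInf Sf ≤ _ := h1
      _ < _ := by exact_mod_cast h2
  have hAb : BddBelow A := by
    refine ⟨m - 1, fun x hx => ?_⟩
    obtain ⟨w, hw, h1, h2⟩ := hx 1 one_pos
    have := hlb w hw
    linarith
  set x₀ : ℝ := sInf A with hx₀def
  have hx₀ : x₀ ∈ A := by
    intro ε hε
    obtain ⟨x, hxA, hxlt⟩ := Real.lt_sInf_add_pos hAne (half_pos hε)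
    obtain ⟨w, hw, h1, h2⟩ := hxA (ε/2) (half_pos hε)
    exact ⟨w, hw, lt_of_le_of_lt (csInf_le hAb hxA) h1, by linarith⟩
  obtain ⟨ε₀, hε₀pos, hgap⟩ : ∃ ε₀ : ℝ, 0 < ε₀ ∧
      ∀ v₀ ∈ VSeq ℓ n a 0, x₀ < (v₀ : ℝ) → x₀ + ε₀ ≤ (v₀ : ℝ) := by
    set T : Set ℝ := insert (x₀ + 1) (((fun v : ℚ => (v : ℝ)) '' VSeq ℓ n a 0) ∩ Set.Ioi x₀)
      with hT
    have hTfin : T.Finite := (Set.Finite.inter_of_left (hfin0.image _) _).insert _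
    have hTne : T.Nonempty := ⟨x₀ + 1, Set.mem_insert _ _⟩
    have hTlb : ∀ y ∈ T, x₀ < y := by
      intro y hy
      rcases Set.mem_insert_iff.mp hy with rfl | ⟨-, hy2⟩
      · linarith
      · exact hy2
    refine ⟨sInf T - x₀, by have := hTlb _ (hTne.csInf_mem hTfin); linarith, ?_⟩
    intro v₀ h₀ hlt
    have hmemT : (v₀ : ℝ) ∈ T := Set.mem_insert_of_mem _ ⟨Set.mem_image_of_mem _ h₀, hlt⟩
    have := csInf_le hTfin.bddBelow hmemT
    linarith
  have key : ∀ k : ℕ, ∃ v p p', v ∈ VSet ℓ n a ∧ p ∈ PL ℓ n a ∧ p' ∈ PL ℓ n a ∧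
      (v : ℝ) ≤ x₀ ∧ x₀ < (((v * p.1 + p.2 - p'.2) / p'.1 : ℚ) : ℝ) ∧
      (((v * p.1 + p.2 - p'.2) / p'.1 : ℚ) : ℝ) < x₀ + ε₀ / ((k:ℝ) + 1) := by
    intro k
    have hεk : (0:ℝ) < ε₀ / ((k:ℝ) + 1) := by positivity
    obtain ⟨w, hw, h1, h2⟩ := hx₀ _ hεk
    obtain ⟨i, hi⟩ := Set.mem_iUnion.mp hw
    rcases crossing hℓ h0 i w hi x₀ h1 with
      ⟨v₀, h₀, hv1, hv2⟩ | ⟨v, hv, p, hp, p', hp', hc1, hc2, hc3⟩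
    · exfalso
      have hg := hgap v₀ h₀ hv1
      have h3 : (v₀:ℝ) ≤ (w:ℝ) := by exact_mod_cast hv2
      have h4 : ε₀ / ((k:ℝ)+1) ≤ ε₀ := by
        apply div_le_self (le_of_lt hε₀pos)
        have : (0:ℝ) ≤ (k:ℝ) := Nat.cast_nonneg k
        linarith
      linarith
    · refine ⟨v, p, p', hv, hp, hp', hc1, hc2, ?_⟩
      have h3 : (((v * p.1 + p.2 - p'.2) / p'.1 : ℚ) : ℝ) ≤ (w:ℝ) := by exact_mod_cast hc3
      linarith
  choose v p p' hvV hpP hpP' hvle hlt1 hlt2 using key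
  have hmemprod : ∀ k, (p k, p' k) ∈ (PL ℓ n a) ×ˢ (PL ℓ n a) :=
    fun k => Finset.mem_product.mpr ⟨hpP k, hpP' k⟩
  set g : ℕ → {x // x ∈ (PL ℓ n a) ×ˢ (PL ℓ n a)} :=
    fun k => ⟨(p k, p' k), hmemprod k⟩ with hg
  obtain ⟨y, hy'⟩ := Finite.exists_infinite_fiber g
  have hy : (g ⁻¹' {y}).Infinite := Set.infinite_coe_iff.mp hy'
  set P : ℚ × ℚ := y.1.1 with hP
  set P' : ℚ × ℚ := y.1.2 with hP'
  have hPmem : P ∈ PL ℓ n a := (Finset.mem_product.mp y.2).1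
  have hP'mem : P' ∈ PL ℓ n a := (Finset.mem_product.mp y.2).2
  have hP1 : (0:ℚ) < P.1 := PL_fst_pos hℓ hPmem
  have hP'1 : (0:ℚ) < P'.1 := PL_fst_pos hℓ hP'mem
  have hP1R : (0:ℝ) < (P.1:ℝ) := by exact_mod_cast hP1
  have hP'1R : (0:ℝ) < (P'.1:ℝ) := by exact_mod_cast hP'1
  have hfib : ∀ k, g k = y → p k = P ∧ p' k = P' := by
    intro k hk
    have h5 : (p k, p' k) = y.1 := congrArg Subtype.val hk
    exact ⟨congrArg Prod.fst h5, congrArg Prod.snd h5⟩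
  set z : ℝ := (x₀ * (P'.1:ℝ) + (P'.2:ℝ) - (P.2:ℝ)) / (P.1:ℝ) with hz
  have hzP : z * (P.1:ℝ) = x₀ * (P'.1:ℝ) + (P'.2:ℝ) - (P.2:ℝ) := by
    rw [hz]; field_simp
  have hbound : ∀ k ∈ g ⁻¹' {y},
      z < ((v k : ℚ) : ℝ) ∧
      ((v k : ℚ) : ℝ) < z + ε₀ * (P'.1:ℝ) / (((k:ℝ) + 1) * (P.1:ℝ)) := by
    intro k hk
    obtain ⟨hpk, hp'k⟩ := hfib k hk
    have h1 := hlt1 k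
    have h2 := hlt2 k
    rw [hpk, hp'k] at h1 h2
    have hcast : (((v k * P.1 + P.2 - P'.2) / P'.1 : ℚ) : ℝ)
        = (((v k : ℚ):ℝ) * (P.1:ℝ) + (P.2:ℝ) - (P'.2:ℝ)) / (P'.1:ℝ) := by push_cast; ring
    rw [hcast] at h1 h2
    rw [lt_div_iff₀ hP'1R] at h1
    rw [div_lt_iff₀ hP'1R] at h2
    have hk1 : (0:ℝ) < (k:ℝ) + 1 := by positivity
    constructor
    · rw [hz, div_lt_iff₀ hP1R]
      linarith
    · have h3 : ((v k : ℚ):ℝ) - z < (ε₀ * (P'.1:ℝ) / ((k:ℝ)+1)) / (P.1:ℝ) := by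
        rw [lt_div_iff₀ hP1R]
        have hexp : (x₀ + ε₀ / ((k:ℝ)+1)) * (P'.1:ℝ)
            = x₀ * (P'.1:ℝ) + (ε₀ * (P'.1:ℝ)) / ((k:ℝ)+1) := by ring
        rw [hexp] at h2
        nlinarith [hzP]
      have h4 : (ε₀ * (P'.1:ℝ) / ((k:ℝ)+1)) / (P.1:ℝ)
          = ε₀ * (P'.1:ℝ) / (((k:ℝ) + 1) * (P.1:ℝ)) := by
        rw [div_div]
      linarith [h3, h4.ge]
  have hzA : z ∈ A := by
    intro ε hε
    obtain ⟨k, hk, hkgt⟩ := hy.exists_gt (Nat.ceil (ε₀ * (P'.1:ℝ) / (ε * (P.1:ℝ))))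
    obtain ⟨hb1, hb2⟩ := hbound k hk
    refine ⟨v k, hvV k, hb1, ?_⟩
    have h5 : ε₀ * (P'.1:ℝ) / (ε * (P.1:ℝ)) ≤ ((Nat.ceil (ε₀ * (P'.1:ℝ) / (ε * (P.1:ℝ)))):ℝ) :=
      Nat.le_ceil _
    have h6 : ((Nat.ceil (ε₀ * (P'.1:ℝ) / (ε * (P.1:ℝ)))):ℝ) < (k:ℝ) := by exact_mod_cast hkgt
    have hk1 : (0:ℝ) < (k:ℝ) + 1 := by positivity
    have h7 : ε₀ * (P'.1:ℝ) / (ε * (P.1:ℝ)) < (k:ℝ) + 1 := by linarith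
    have h8 : ε₀ * (P'.1:ℝ) / (((k:ℝ) + 1) * (P.1:ℝ)) < ε := by
      rw [div_lt_iff₀ (by positivity)]
      rw [div_lt_iff₀ (by positivity)] at h7
      nlinarith
    linarith
  have hx₀z : x₀ ≤ z := csInf_le hAb hzA
  obtain ⟨k, hk⟩ := hy.nonempty
  have hb := (hbound k hk).1
  have hv := hvle k
  linarith
end

section
/- Every Hahn series solution f of L(f) = 0 has support contained in the set V = ∪_{i≥0} V_i, where V_0 = −S(L) and V_{i+1} = ∪_{v ∈ V_i} π(Ψ(v)). -/
open Polynomial Finset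

section Aux

variable {K : Type*} [Field K]

lemma hahn_coeff_sum {α : Type*} (s : Finset α) (F : α → HahnSeries ℚ K) (q : ℚ) :
    (∑ x ∈ s, F x).coeff q = ∑ x ∈ s, (F x).coeff q :=
  map_sum (HahnSeries.coeff.addMonoidHom q) F s

lemma ofPS_monomial (j : ℕ) (c : K) :
    HahnSeries.ofPowerSeries ℚ K ((Polynomial.monomial j c : Polynomial K) : PowerSeries K)
      = HahnSeries.single (j : ℚ) c := by
  rw [← Polynomial.C_mul_X_pow_eq_monomial, Polynomial.coe_mul, Polynomial.coe_pow,
    Polynomial.coe_C, Polynomial.coe_X, map_mul, map_pow, HahnSeries.ofPowerSeries_C,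
    HahnSeries.ofPowerSeries_X, HahnSeries.single_pow]
  show HahnSeries.single (0 : ℚ) c * _ = _
  rw [HahnSeries.single_mul_single]
  simp

lemma mul_ofPS_coeff (p : Polynomial K) (s : HahnSeries ℚ K) (q : ℚ) :
    ((HahnSeries.ofPowerSeries ℚ K (p : PowerSeries K)) * s).coeff q
      = ∑ j ∈ p.support, p.coeff j * s.coeff (q - (j : ℚ)) := by
  conv_lhs => rw [← Polynomial.sum_monomial_eq p]
  rw [Polynomial.sum]
  have hcoe : (((∑ j ∈ p.support, Polynomial.monomial j (p.coeff j) : Polynomial K)) :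
      PowerSeries K) = ∑ j ∈ p.support, ((Polynomial.monomial j (p.coeff j) : Polynomial K) :
      PowerSeries K) := by
    rw [← Polynomial.coeToPowerSeries.ringHom_apply, map_sum]
    simp
  rw [hcoe, map_sum, Finset.sum_mul, hahn_coeff_sum]
  refine Finset.sum_congr rfl fun j hj => ?_
  rw [ofPS_monomial]
  have hq : q = (q - (j : ℚ)) + (j : ℚ) := by ring
  rw [hq, HahnSeries.coeff_single_mul_add]
  ring_nf

lemma emb_coeff (ℓ : ℕ) (hℓ : 2 ≤ ℓ) (i : ℕ) (f : HahnSeries ℚ K) (x : ℚ) :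
    (HahnSeries.embDomain (scaleEmb ℓ hℓ i) f).coeff x = f.coeff (x / (ℓ : ℚ) ^ i) := by
  have hp : (0 : ℚ) < (ℓ : ℚ) ^ i :=
    pow_pos (by exact_mod_cast Nat.lt_of_lt_of_le Nat.zero_lt_two hℓ) i
  have hx : x = scaleEmb ℓ hℓ i (x / (ℓ : ℚ) ^ i) := by
    show x = (ℓ : ℚ) ^ i * (x / (ℓ : ℚ) ^ i)
    field_simp
  conv_lhs => rw [hx]
  exact HahnSeries.embDomain_coeff

lemma mahler_coeff (ℓ n : ℕ) (hℓ : 2 ≤ ℓ) (a : ℕ → Polynomial K) (f : HahnSeries ℚ K) (q : ℚ) :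
    (mahlerOp ℓ hℓ n a f).coeff q
      = ∑ i ∈ Finset.range (n + 1), ∑ j ∈ (a i).support,
          (a i).coeff j * f.coeff ((q - (j : ℚ)) / (ℓ : ℚ) ^ i) := by
  rw [mahlerOp, hahn_coeff_sum]
  refine Finset.sum_congr rfl fun i _ => ?_
  rw [mul_ofPS_coeff]
  exact Finset.sum_congr rfl fun j _ => by rw [emb_coeff]

lemma mem_PL {ℓ n : ℕ} {a : ℕ → Polynomial K} {p : ℚ × ℚ} :
    p ∈ PL ℓ n a ↔ ∃ i ≤ n, ∃ j ∈ (a i).support, ((ℓ : ℚ) ^ i, (j : ℚ)) = p := by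
  simp [PL, Nat.lt_succ_iff]

end Aux

theorem stmt11 {K : Type*} [Field K] (ℓ n : ℕ) (hℓ : 2 ≤ ℓ) (a : ℕ → Polynomial K)
    (h0 : a 0 ≠ 0) (hn : a n ≠ 0) (f : HahnSeries ℚ K)
    (hf : mahlerOp ℓ hℓ n a f = 0) :
    f.support ⊆ VSet ℓ n a := by
  have hℓ1 : (1 : ℚ) < (ℓ : ℚ) := by exact_mod_cast Nat.lt_of_lt_of_le Nat.one_lt_two hℓ
  have hpow : ∀ i : ℕ, (0 : ℚ) < (ℓ : ℚ) ^ i := fun i => pow_pos (lt_trans one_pos hℓ1) i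
  intro w0 hw0
  refine Set.WellFoundedOn.induction f.isWF_support hw0 ?_
  clear hw0 w0
  intro w hw IH
  -- PL is nonempty
  have hPLne : (PL ℓ n a).Nonempty := by
    refine ⟨((ℓ : ℚ) ^ 0, ((a 0).natDegree : ℚ)), mem_PL.2 ⟨0, Nat.zero_le n, (a 0).natDegree,
      Polynomial.natDegree_mem_support_of_nonzero h0, rfl⟩⟩
  have hp1pos : ∀ p ∈ PL ℓ n a, 0 < p.1 := by
    intro p hp
    obtain ⟨i, _, j, _, hpe⟩ := mem_PL.1 hp
    rw [← hpe]
    exact hpow i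
  have hPsine : (PsiSet ℓ n a w).Nonempty := hPLne.image _
  set q := (PsiSet ℓ n a w).min' hPsine with hqdef
  have hq_min : ∀ p ∈ PL ℓ n a, q ≤ w * p.1 + p.2 := fun p hp =>
    Finset.min'_le _ _ (Finset.mem_image_of_mem _ hp)
  obtain ⟨p₀, hp₀PL, hp₀⟩ := Finset.mem_image.1 (Finset.min'_mem (PsiSet ℓ n a w) hPsine)
  -- fact A : all slopes are ≤ w
  have hA : ∀ p ∈ PL ℓ n a, (q - p.2) / p.1 ≤ w := by
    intro p hp
    rw [div_le_iff₀ (hp1pos p hp)]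
    have := hq_min p hp
    linarith
  -- fact C : piF q = w
  have hwt : w ∈ (PL ℓ n a).image fun p => (q - p.2) / p.1 := by
    refine Finset.mem_image.2 ⟨p₀, hp₀PL, ?_⟩
    rw [show q - p₀.2 = w * p₀.1 by linarith [hp₀]]
    exact mul_div_cancel_right₀ w (hp1pos p₀ hp₀PL).ne'
  have hpiF : piF ℓ n a q = w := by
    have hne : ((PL ℓ n a).image fun p => (q - p.2) / p.1).Nonempty := ⟨w, hwt⟩
    have hmax' : ((PL ℓ n a).image fun p => (q - p.2) / p.1).max' hne = w :=
      le_antisymm (Finset.max'_le _ _ _ (fun y hy => by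
        obtain ⟨p, hp, hpe⟩ := Finset.mem_image.1 hy
        exact hpe ▸ hA p hp)) (Finset.le_max' _ _ hwt)
    rw [piF, ← Finset.coe_max' hne, hmax']
    rfl
  by_cases hcase : ∃ p ∈ PL ℓ n a, ∃ p' ∈ PL ℓ n a, p ≠ p' ∧ w * p.1 + p.2 = q ∧
      w * p'.1 + p'.2 = q
  · -- two minimizers : w ∈ VSeq 0
    obtain ⟨p, hp, p', hp', hpp', hq1, hq2⟩ := hcase
    have hslope : -w ∈ slopeSet ℓ n a := by
      refine ⟨q, ⟨p, hp, p', hp', hpp', by linarith [hq1] , by linarith [hq2]⟩, ?_⟩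
      intro r hr
      have := hq_min r hr
      have hre : r.2 - (-w) * r.1 = w * r.1 + r.2 := by ring
      rw [hre]
      exact this
    exact Set.mem_iUnion.2 ⟨0, ⟨-w, hslope, neg_neg w⟩⟩
  · -- unique minimizer
    have huniq : ∀ p ∈ PL ℓ n a, w * p.1 + p.2 = q → p = p₀ := by
      intro p hp hpq
      by_contra hne
      exact hcase ⟨p, hp, p₀, hp₀PL, hne, hpq, hp₀⟩
    obtain ⟨i₀, hi₀, j₀, hj₀, hp₀eq⟩ := mem_PL.1 hp₀PL
    have hw0 : (q - (j₀ : ℚ)) / (ℓ : ℚ) ^ i₀ = w := by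
      have h1 : w * (ℓ : ℚ) ^ i₀ + (j₀ : ℚ) = q := by
        rw [← hp₀eq] at hp₀; exact hp₀
      rw [show q - (j₀ : ℚ) = w * (ℓ : ℚ) ^ i₀ by linarith]
      exact mul_div_cancel_right₀ w (hpow i₀).ne'
    have heq : ∑ i ∈ Finset.range (n + 1), ∑ j ∈ (a i).support,
        (a i).coeff j * f.coeff ((q - (j : ℚ)) / (ℓ : ℚ) ^ i) = 0 := by
      have h := mahler_coeff ℓ n hℓ a f q
      rw [hf] at h
      simpa using h.symm
    -- key : only (i₀, j₀) attains value w
    have hkey : ∀ i, i ≤ n → ∀ j ∈ (a i).support,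
        (q - (j : ℚ)) / (ℓ : ℚ) ^ i = w → i = i₀ ∧ j = j₀ := by
      intro i hi j hj hv
      have hpPL : ((ℓ : ℚ) ^ i, (j : ℚ)) ∈ PL ℓ n a := mem_PL.2 ⟨i, hi, j, hj, rfl⟩
      have h1 : q - (j : ℚ) = w * (ℓ : ℚ) ^ i := (div_eq_iff (hpow i).ne').1 hv
      have h2 : w * (ℓ : ℚ) ^ i + (j : ℚ) = q := by linarith
      have h3 := huniq _ hpPL h2
      rw [← hp₀eq, Prod.mk.injEq] at h3
      refine ⟨(pow_right_strictMono₀ hℓ1).injective h3.1, Nat.cast_injective h3.2⟩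
    -- find a strictly smaller support element
    have hex : ∃ i ∈ Finset.range (n + 1), ∃ j ∈ (a i).support,
        (q - (j : ℚ)) / (ℓ : ℚ) ^ i ≠ w ∧ f.coeff ((q - (j : ℚ)) / (ℓ : ℚ) ^ i) ≠ 0 := by
      by_contra hno
      push_neg at hno
      have hsum : ∑ i ∈ Finset.range (n + 1), ∑ j ∈ (a i).support,
          (a i).coeff j * f.coeff ((q - (j : ℚ)) / (ℓ : ℚ) ^ i)
            = (a i₀).coeff j₀ * f.coeff ((q - (j₀ : ℚ)) / (ℓ : ℚ) ^ i₀) := by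
        rw [Finset.sum_eq_single_of_mem i₀ (Finset.mem_range.2 (Nat.lt_succ_of_le hi₀))]
        · rw [Finset.sum_eq_single_of_mem j₀ hj₀]
          intro j hj hjne
          by_cases hv : (q - (j : ℚ)) / (ℓ : ℚ) ^ i₀ = w
          · exact absurd ((hkey i₀ hi₀ j hj hv).2) hjne
          · rw [hno i₀ (Finset.mem_range.2 (Nat.lt_succ_of_le hi₀)) j hj hv, mul_zero]
        · intro i hi hine
          refine Finset.sum_eq_zero fun j hj => ?_
          by_cases hv : (q - (j : ℚ)) / (ℓ : ℚ) ^ i = w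
          · exact absurd ((hkey i (Nat.lt_succ_iff.1 (Finset.mem_range.1 hi)) j hj hv).1) hine
          · rw [hno i hi j hj hv, mul_zero]
      rw [hsum, hw0] at heq
      exact (mul_ne_zero (Polynomial.mem_support_iff.1 hj₀) hw) heq
    obtain ⟨i, hi, j, hj, hvne, hvmem⟩ := hex
    set v := (q - (j : ℚ)) / (ℓ : ℚ) ^ i with hvdef
    have hpPL : ((ℓ : ℚ) ^ i, (j : ℚ)) ∈ PL ℓ n a :=
      mem_PL.2 ⟨i, Nat.lt_succ_iff.1 (Finset.mem_range.1 hi), j, hj, rfl⟩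
    have hvlt : v < w := lt_of_le_of_ne (hA _ hpPL) hvne
    have hvVSet : v ∈ VSet ℓ n a := IH v hvmem hvlt
    obtain ⟨m, hm⟩ := Set.mem_iUnion.1 hvVSet
    refine Set.mem_iUnion.2 ⟨m + 1, ?_⟩
    show w ∈ ⋃ u ∈ VSeq ℓ n a m, ((PsiSet ℓ n a u).image (piF ℓ n a) : Set ℚ)
    refine Set.mem_biUnion hm ?_
    refine Finset.mem_coe.2 (Finset.mem_image.2 ⟨q, ?_, hpiF⟩)
    refine Finset.mem_image.2 ⟨((ℓ : ℚ) ^ i, (j : ℚ)), hpPL, ?_⟩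
    show v * (ℓ : ℚ) ^ i + (j : ℚ) = q
    rw [hvdef, div_mul_cancel₀ _ (hpow i).ne']
    ring
end
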